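/- Let C be a cartesian category. Every effective descent morphism f : X ⟶ Y in C is a regular epimorphism. -/

import Mathlib

open CategoryTheory Limits

universe v₁ v₂ v₃ u₁ u₂ u₃

/-- Transport a coequalizer cofork along an isomorphism of the middle object. -/
noncomputable def isColimitCoforkOfPrecompIso {C : Type u₁} [Category.{v₁} C]
    {W P X Y : C} {a b : W ⟶ P} {π : P ⟶ Y} (hw : a ≫ π = b ≫ π)
    (hc : IsColimit (Cofork.ofπ π hw)) (e : X ⟶ P) [IsIso e] (g : X ⟶ Y)
    (hg : e ≫ π = g) (w' : (a ≫ inv e) ≫ g = (b ≫ inv e) ≫ g) :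
    IsColimit (Cofork.ofπ g w') :=
  Cofork.IsColimit.mk _
    (fun s => hc.desc (Cofork.ofπ (inv e ≫ s.π)
      (by rw [← Category.assoc, ← Category.assoc]; exact s.condition)))
    (fun s => by
      have h1 : (Cofork.ofπ π hw).π ≫ hc.desc (Cofork.ofπ (inv e ≫ s.π)
          (by rw [← Category.assoc, ← Category.assoc]; exact s.condition))
          = inv e ≫ s.π := Cofork.IsColimit.π_desc hc
      dsimp at h1 ⊢
      rw [← hg, Category.assoc, h1, IsIso.hom_inv_id_assoc])
    (fun s m hm => by
      apply Cofork.IsColimit.hom_ext hc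
      have h1 : (Cofork.ofπ π hw).π ≫ hc.desc (Cofork.ofπ (inv e ≫ s.π)
          (by rw [← Category.assoc, ← Category.assoc]; exact s.condition))
          = inv e ≫ s.π := Cofork.IsColimit.π_desc hc
      dsimp at h1 hm ⊢
      rw [h1, ← hm, ← hg]; simp)

/-- A morphism `f : X ⟶ Y` of a cartesian category is an effective descent morphism if the
pullback functor `f* : C/Y ⥤ C/X` is monadic. -/
def EffectiveDescentMorphism {C : Type u₁} [Category.{v₁} C] [HasFiniteLimits C]
    {X Y : C} (f : X ⟶ Y) : Prop :=
  Nonempty (MonadicRightAdjoint (Over.pullback f))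

open CategoryTheory.Monad CategoryTheory.Monad.MonadicityInternal in
/-- Every effective descent morphism in a cartesian category is a regular epimorphism. -/
theorem regularEpi_of_effectiveDescentMorphism
    {C : Type u₁} [Category.{v₁} C] [HasFiniteLimits C]
    {X Y : C} (f : X ⟶ Y) (hf : EffectiveDescentMorphism f) :
    Nonempty (RegularEpi f) := by
  obtain ⟨hm⟩ := hf
  let adj := Over.mapPullbackAdj f
  let B : Over Y := Over.mk (𝟙 Y)
  haveI : (Over.pullback f).IsSplitPair
      ((Over.map f).map ((Over.pullback f).map (adj.counit.app B)))
      (adj.counit.app ((Over.map f).obj ((Over.pullback f).obj B))) :=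
    main_pair_G_split adj ((Monad.comparison adj).obj B)
  haveI := createsGSplitCoequalizersOfMonadic (Over.pullback f)
      ((Over.map f).map ((Over.pullback f).map (adj.counit.app B)))
      (adj.counit.app ((Over.map f).obj ((Over.pullback f).obj B)))
  have hcolim : IsColimit (counitCofork adj B) :=
    counitCoequalizerOfReflectsCoequalizer adj B
  have h2 := isColimitCoforkMapOfIsColimit (Over.forget Y) _ hcolim
  let π₀ : pullback B.hom f ⟶ Y := (Over.forget Y).map (adj.counit.app B)
  have hπ₀ : π₀ = pullback.fst B.hom f := by
    simp [π₀, adj, Over.mapPullbackAdj_counit_app]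
  let e : X ⟶ pullback B.hom f := pullback.lift f (𝟙 X) (by simp [B])
  have h1 : e ≫ pullback.snd B.hom f = 𝟙 X := pullback.lift_snd _ _ _
  have h2' : e ≫ pullback.fst B.hom f = f := pullback.lift_fst _ _ _
  haveI : IsIso e := by
    refine ⟨pullback.snd B.hom f, h1, ?_⟩
    apply pullback.hom_ext
    · rw [Category.assoc, h2', Category.id_comp, ← pullback.condition]; simp [B]
    · rw [Category.assoc, h1]; simp
  have hg : e ≫ π₀ = f := by rw [hπ₀]; exact h2'
  let a₀ : _ ⟶ pullback B.hom f := (Over.forget Y).map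
    ((Over.map f).map ((Over.pullback f).map (adj.counit.app B)))
  let b₀ : _ ⟶ pullback B.hom f := (Over.forget Y).map
    (adj.counit.app ((Over.map f).obj ((Over.pullback f).obj B)))
  have hab : a₀ ≫ π₀ = b₀ ≫ π₀ := by
    erw [← Functor.map_comp, ← Functor.map_comp]
    exact congrArg (Over.forget Y).map (adj.counit_naturality (adj.counit.app B))
  have hinv : inv e ≫ f = π₀ := by rw [IsIso.inv_comp_eq]; exact hg.symm
  have w' : (a₀ ≫ inv e) ≫ f = (b₀ ≫ inv e) ≫ f := by
    rw [Category.assoc, Category.assoc, hinv]; exact hab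
  exact ⟨{
    W := _
    left := a₀ ≫ inv e
    right := b₀ ≫ inv e
    w := w'
    isColimit := isColimitCoforkOfPrecompIso hab h2 e f hg w' }⟩
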